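/- Suppose z₁, z₂, z₃ : ℝ → ℂ are differentiable and satisfy z₁' = 2·conj(z₂ z₃), z₂' = -2·conj(z₃ z₁), z₃' = -2·conj(z₁ z₂). Then Im(z₁(t) z₂(t) z₃(t)) is constant in t. -/

import Mathlib

/-- For solutions of the reduced evolution equations, Im(z₁ z₂ z₃) is constant. -/
theorem im_product_constant (z₁ z₂ z₃ : ℝ → ℂ)
    (h1 : ∀ t : ℝ, HasDerivAt z₁ (2 * (starRingEnd ℂ) (z₂ t * z₃ t)) t)
    (h2 : ∀ t : ℝ, HasDerivAt z₂ (-2 * (starRingEnd ℂ) (z₃ t * z₁ t)) t)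
    (h3 : ∀ t : ℝ, HasDerivAt z₃ (-2 * (starRingEnd ℂ) (z₁ t * z₂ t)) t) :
    ∀ s t : ℝ, (z₁ s * z₂ s * z₃ s).im = (z₁ t * z₂ t * z₃ t).im := by
  have key : ∀ t : ℝ, HasDerivAt (fun t => (z₁ t * z₂ t * z₃ t).im) 0 t := by
    intro t
    have hp := ((h1 t).mul (h2 t)).mul (h3 t)
    have him := Complex.imCLM.hasFDerivAt.comp_hasDerivAt t hp
    convert him using 1
    · rfl
    · rfl
    · rfl
    simp only [Complex.imCLM_apply]
    simp [Complex.mul_im, Complex.mul_re]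
    ring
  intro s t
  exact is_const_of_deriv_eq_zero (fun x => (key x).differentiableAt)
    (fun x => (key x).deriv) s t
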